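/- Let G = (G_1, ..., G_n) be independent with G_i ~ N(0, σ_i²). Then for 2 ≤ p < ∞, E‖G‖_{ℓ_p} ≥ c[max_{i ≤ e^p} σ_i^* √(log(i+1)) + √p (∑_{i ≥ e^p} (σ_i^*)^p)^{1/p}] for a universal constant c > 0. -/

import Mathlib

open Real MeasureTheory ProbabilityTheory

open scoped ENNReal NNReal


noncomputable def snu : Measure ℝ := gaussianReal 0 1

instance : IsProbabilityMeasure snu := by unfold snu; infer_instance

lemma snu_def : snu = MeasureTheory.Measure.withDensity volume (gaussianPDF 0 1) :=
  gaussianReal_of_var_ne_zero 0 one_ne_zero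

lemma measurable_rpow_c {q : ℝ} (hq : 0 ≤ q) : Measurable (fun x : ℝ => x ^ q) :=
  (Real.continuous_rpow_const hq).measurable

lemma measurable_abs_rpow {q : ℝ} (hq : 0 ≤ q) : Measurable (fun x : ℝ => |x| ^ q) :=
  (measurable_rpow_c hq).comp _root_.measurable_abs

/-- pointwise: `t^r * exp(-t/4) ≤ (4r/e)^r` for `t ≥ 0`, `r > 0`. -/
lemma rpow_mul_exp_le {r : ℝ} (hr : 0 < r) {t : ℝ} (ht : 0 ≤ t) :
    t ^ r * rexp (-(t/4)) ≤ (4*r/rexp 1) ^ r := by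
  have h4r : (0:ℝ) < 4*r := by linarith
  have hs : t ^ r = (4*r) ^ r * (t/(4*r)) ^ r := by
    rw [← Real.mul_rpow h4r.le (by positivity)]
    rw [mul_div_cancel₀ _ h4r.ne']
  rw [hs]
  have hsle : (t/(4*r)) ^ r ≤ rexp (t/(4*r) - 1) ^ r := by
    apply Real.rpow_le_rpow (by positivity) _ hr.le
    have := Real.add_one_le_exp (t/(4*r) - 1)
    linarith
  have : (4*r) ^ r * (t/(4*r)) ^ r * rexp (-(t/4)) ≤
      (4*r) ^ r * rexp (t/(4*r) - 1) ^ r * rexp (-(t/4)) := by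
    apply mul_le_mul_of_nonneg_right _ (Real.exp_nonneg _)
    exact mul_le_mul_of_nonneg_left hsle (Real.rpow_nonneg h4r.le r)
  refine this.trans ?_
  rw [← Real.exp_mul, Real.div_rpow h4r.le (Real.exp_nonneg 1), ← Real.exp_mul]
  rw [mul_comm (t/(4*r) - 1) r, mul_sub, mul_one]
  have hrt : r * (t / (4*r)) = t/4 := by field_simp
  rw [hrt, one_mul, mul_assoc, ← Real.exp_add,
    show t/4 - r + -(t/4) = -r by ring, div_eq_mul_inv, ← Real.exp_neg]

lemma abs_rpow_eq_sq_rpow (x q : ℝ) : |x| ^ q = (x^2) ^ (q/2) := by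
  rw [← sq_abs, ← Real.rpow_natCast |x| 2, ← Real.rpow_mul (abs_nonneg x)]
  congr 1
  push_cast
  ring

/-- pdf bound: `|x|^q * pdf(x) ≤ (2q/e)^{q/2} * exp(-x²/4)`. -/
lemma abs_rpow_mul_pdf_le {q : ℝ} (hq : 0 < q) (x : ℝ) :
    |x| ^ q * gaussianPDFReal 0 1 x ≤ (2*q/rexp 1) ^ (q/2) * rexp (-(x^2/4)) := by
  have hpdf : gaussianPDFReal 0 1 x ≤ rexp (-(x^2/4)) * rexp (-(x^2/4)) := by
    unfold gaussianPDFReal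
    rw [← Real.exp_add]
    have h1 : (Real.sqrt (2 * π * 1))⁻¹ ≤ 1 := by
      have h0 : (1:ℝ) ≤ Real.sqrt (2 * π * 1) := by
        have h0' := Real.sqrt_le_sqrt (show (1:ℝ) ≤ 2*π*1 by nlinarith [Real.pi_gt_three])
        rwa [Real.sqrt_one] at h0'
      exact inv_le_one_of_one_le₀ h0
    have h2 : rexp (-(x - 0)^2 / (2 * (1:NNReal))) ≤ rexp (-(x^2/4) + -(x^2/4)) := by
      apply Real.exp_le_exp.2
      push_cast
      nlinarith [sq_nonneg x]
    calc (Real.sqrt (2 * π * (1:NNReal)))⁻¹ * rexp (-(x - 0)^2 / (2 * (1:NNReal)))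
        ≤ 1 * rexp (-(x^2/4) + -(x^2/4)) := by
          apply mul_le_mul _ h2 (Real.exp_nonneg _) zero_le_one
          · push_cast at h1 ⊢; exact h1
      _ = rexp (-(x^2/4) + -(x^2/4)) := one_mul _
  have key : |x| ^ q * rexp (-(x^2/4)) ≤ (2*q/rexp 1) ^ (q/2) := by
    rw [abs_rpow_eq_sq_rpow]
    have := rpow_mul_exp_le (r := q/2) (by linarith) (sq_nonneg x)
    have h44 : (4*(q/2)/rexp 1) = (2*q/rexp 1) := by ring
    rw [h44] at this
    exact this
  calc |x| ^ q * gaussianPDFReal 0 1 x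
      ≤ |x| ^ q * (rexp (-(x^2/4)) * rexp (-(x^2/4))) :=
        mul_le_mul_of_nonneg_left hpdf (Real.rpow_nonneg (abs_nonneg x) q)
    _ = (|x| ^ q * rexp (-(x^2/4))) * rexp (-(x^2/4)) := by ring
    _ ≤ (2*q/rexp 1) ^ (q/2) * rexp (-(x^2/4)) :=
        mul_le_mul_of_nonneg_right key (Real.exp_nonneg _)
/-- transfer of lintegral to density. -/
lemma snu_lintegral (g : ℝ → ℝ≥0∞) (hg : Measurable g) :
    ∫⁻ x, g x ∂snu = ∫⁻ x, ENNReal.ofReal (gaussianPDFReal 0 1 x) * g x := by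
  rw [snu_def, lintegral_withDensity_eq_lintegral_mul _ (measurable_gaussianPDF 0 1) hg]
  rfl

lemma snu_lintegral_abs_rpow_le {q : ℝ} (hq : 0 < q) :
    ∫⁻ x, ENNReal.ofReal (|x| ^ q) ∂snu ≤ ENNReal.ofReal ((2*q/rexp 1) ^ (q/2) * 4) := by
  rw [snu_lintegral _ ((measurable_abs_rpow hq.le).ennreal_ofReal)]
  have hint : Integrable (fun x : ℝ => (2*q/rexp 1) ^ (q/2) * rexp (-(1/4) * x^2)) := by
    exact (integrable_exp_neg_mul_sq (by norm_num : (0:ℝ) < 1/4)).const_mul _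
  have step1 : ∫⁻ x, ENNReal.ofReal (gaussianPDFReal 0 1 x) * ENNReal.ofReal (|x| ^ q)
      ≤ ∫⁻ x, ENNReal.ofReal ((2*q/rexp 1) ^ (q/2) * rexp (-(1/4) * x^2)) := by
    apply lintegral_mono
    intro x
    simp only []
    rw [← ENNReal.ofReal_mul (gaussianPDFReal_nonneg 0 1 x)]
    apply ENNReal.ofReal_le_ofReal
    have := abs_rpow_mul_pdf_le hq x
    calc gaussianPDFReal 0 1 x * |x| ^ q = |x| ^ q * gaussianPDFReal 0 1 x := by ring
      _ ≤ (2*q/rexp 1) ^ (q/2) * rexp (-(x^2/4)) := this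
      _ = (2*q/rexp 1) ^ (q/2) * rexp (-(1/4) * x^2) := by ring_nf
  refine step1.trans ?_
  rw [← ofReal_integral_eq_lintegral_ofReal hint
    (Filter.Eventually.of_forall (fun x => by positivity))]
  apply ENNReal.ofReal_le_ofReal
  rw [MeasureTheory.integral_const_mul]
  apply mul_le_mul_of_nonneg_left _ (by positivity)
  have : ∫ x : ℝ, rexp (-(1/4) * x^2) = Real.sqrt (π / (1/4)) := integral_gaussian (1/4)
  rw [this]
  have h16 : π / (1/4:ℝ) ≤ 16 := by nlinarith [Real.pi_le_four]
  calc Real.sqrt (π / (1/4)) ≤ Real.sqrt 16 := Real.sqrt_le_sqrt h16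
    _ = 4 := by
        rw [show (16:ℝ) = 4^2 by norm_num, Real.sqrt_sq (by norm_num : (0:ℝ) ≤ 4)]

lemma snu_integrable_abs_rpow {q : ℝ} (hq : 0 < q) :
    Integrable (fun x => |x| ^ q) snu := by
  constructor
  · exact (measurable_abs_rpow hq.le).aestronglyMeasurable
  · rw [hasFiniteIntegral_iff_ofReal
      (Filter.Eventually.of_forall (fun x => Real.rpow_nonneg (abs_nonneg x) q))]
    exact lt_of_le_of_lt (snu_lintegral_abs_rpow_le hq) ENNReal.ofReal_lt_top

lemma snu_moment_le {q : ℝ} (hq : 0 < q) :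
    ∫ x, |x| ^ q ∂snu ≤ (2*q/rexp 1) ^ (q/2) * 4 := by
  rw [integral_eq_lintegral_of_nonneg_ae
    (Filter.Eventually.of_forall (fun x => Real.rpow_nonneg (abs_nonneg x) q))
    (measurable_abs_rpow hq.le).aestronglyMeasurable]
  exact ENNReal.toReal_le_of_le_ofReal (by positivity) (snu_lintegral_abs_rpow_le hq)

/-- Gaussian tail lower bound. -/
lemma snu_tail {u : ℝ} (hu : 0 ≤ u) :
    ENNReal.ofReal (rexp (-9 - u^2)) ≤ snu (Set.Ici u) := by
  have hsub : snu (Set.Icc u (u+1)) ≤ snu (Set.Ici u) :=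
    measure_mono Set.Icc_subset_Ici_self
  refine le_trans ?_ hsub
  rw [snu_def, MeasureTheory.withDensity_apply _ measurableSet_Icc]
  have hlow : ∀ x ∈ Set.Icc u (u+1),
      ENNReal.ofReal (rexp (-9 - u^2)) ≤ gaussianPDF 0 1 x := by
    intro x hx
    unfold gaussianPDF
    apply ENNReal.ofReal_le_ofReal
    unfold gaussianPDFReal
    have hsq : (x - 0)^2 ≤ (u+1)^2 := by
      rcases hx with ⟨h1, h2⟩
      rw [sub_zero]
      apply sq_le_sq' (by linarith) h2
    have hexp : rexp (-(u+1)^2 / (2 * (1:NNReal))) ≤ rexp (-(x-0)^2 / (2 * (1:NNReal))) := by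
      apply Real.exp_le_exp.2
      push_cast
      nlinarith
    have hc : rexp (-1) ≤ (Real.sqrt (2 * π * (1:NNReal)))⁻¹ := by
      push_cast
      rw [mul_one]
      have he : Real.sqrt (2 * π) ≤ rexp 1 := by
        have h1 : Real.sqrt (2*π) ≤ Real.sqrt (rexp 1 ^ 2) := by
          apply Real.sqrt_le_sqrt
          nlinarith [Real.exp_one_gt_d9, Real.pi_lt_d2]
        rwa [Real.sqrt_sq (Real.exp_nonneg 1)] at h1
      rw [Real.exp_neg]
      exact inv_anti₀ (Real.sqrt_pos.2 (by positivity)) he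
    calc rexp (-9 - u^2) ≤ rexp (-1) * rexp (-(u+1)^2 / (2 * (1:NNReal))) := by
          rw [← Real.exp_add]
          apply Real.exp_le_exp.2
          push_cast
          nlinarith [sq_nonneg (u-1)]
      _ ≤ (Real.sqrt (2 * π * (1:NNReal)))⁻¹ * rexp (-(x-0)^2 / (2 * (1:NNReal))) := by
          apply mul_le_mul hc hexp (Real.exp_nonneg _) (by positivity)
  calc ENNReal.ofReal (rexp (-9 - u^2))
      = ENNReal.ofReal (rexp (-9 - u^2)) * volume (Set.Icc u (u+1)) := by
        rw [Real.volume_Icc]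
        norm_num
    _ = ∫⁻ x in Set.Icc u (u+1), ENNReal.ofReal (rexp (-9 - u^2)) := by
        rw [MeasureTheory.setLIntegral_const]
    _ ≤ ∫⁻ x in Set.Icc u (u+1), gaussianPDF 0 1 x := by
        apply MeasureTheory.setLIntegral_mono (measurable_gaussianPDF 0 1) hlow
lemma snu_Ici_toReal_ge {u : ℝ} (hu : 0 ≤ u) :
    rexp (-9 - u^2) ≤ (snu (Set.Ici u)).toReal := by
  have h := snu_tail hu
  have := ENNReal.toReal_mono (measure_ne_top snu _) h
  rwa [ENNReal.toReal_ofReal (Real.exp_nonneg _)] at this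

/-- Moment lower bound for the standard Gaussian. -/
lemma snu_moment_ge {q : ℝ} (hq : 0 < q) :
    q ^ (q/2) * rexp (-9 - q) ≤ ∫ x, |x| ^ q ∂snu := by
  have hnn : ∀ x : ℝ, 0 ≤ |x| ^ q := fun x => Real.rpow_nonneg (abs_nonneg x) q
  have hint := snu_integrable_abs_rpow hq
  have h1 : q ^ (q/2) * (snu (Set.Ici (Real.sqrt q))).toReal
      ≤ ∫ x in Set.Ici (Real.sqrt q), |x| ^ q ∂snu := by
    apply setIntegral_ge_of_const_le_real measurableSet_Ici (measure_ne_top snu _)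
    · intro x hx
      have hx' : Real.sqrt q ≤ x := hx
      have hx0 : 0 ≤ x := le_trans (Real.sqrt_nonneg q) hx'
      have hqq : q ^ (q/2) = Real.sqrt q ^ q := by
        rw [Real.sqrt_eq_rpow, ← Real.rpow_mul hq.le]
        congr 1
        ring
      rw [hqq, abs_of_nonneg hx0]
      exact Real.rpow_le_rpow (Real.sqrt_nonneg q) hx' hq.le
    · exact hint.integrableOn
  have h2 : ∫ x in Set.Ici (Real.sqrt q), |x| ^ q ∂snu ≤ ∫ x, |x| ^ q ∂snu :=
    setIntegral_le_integral hint (Filter.Eventually.of_forall hnn)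
  have h3 : rexp (-9 - q) ≤ (snu (Set.Ici (Real.sqrt q))).toReal := by
    have := snu_Ici_toReal_ge (Real.sqrt_nonneg q)
    rwa [Real.sq_sqrt hq.le] at this
  calc q ^ (q/2) * rexp (-9 - q) ≤ q ^ (q/2) * (snu (Set.Ici (Real.sqrt q))).toReal :=
        mul_le_mul_of_nonneg_left h3 (Real.rpow_nonneg hq.le _)
    _ ≤ ∫ x in Set.Ici (Real.sqrt q), |x| ^ q ∂snu := h1
    _ ≤ ∫ x, |x| ^ q ∂snu := h2

lemma snu_moment_pos {q : ℝ} (hq : 0 < q) : 0 < ∫ x, |x| ^ q ∂snu :=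
  lt_of_lt_of_le (by positivity) (snu_moment_ge hq)

/-- Scaling: the Gaussian with variance τ² is the pushforward of the standard one. -/
lemma gauss_scale {τ : ℝ} (hτ : 0 < τ) :
    gaussianReal 0 ((τ^2).toNNReal) = Measure.map (fun y => τ * y) snu := by
  unfold snu
  rw [show (fun y : ℝ => τ * y) = (fun y : ℝ => τ * y) from rfl]
  rw [ProbabilityTheory.gaussianReal_map_const_mul τ]
  congr 1
  · rw [mul_zero]
  · ext
    simp [Real.coe_toNNReal _ (sq_nonneg τ)]

section transfer

variable {Ω : Type} [MeasurableSpace Ω] {μ : Measure Ω} [IsProbabilityMeasure μ]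
variable {X : Ω → ℝ} {τ : ℝ}

/-- Transfer of moments. -/
lemma map_moment_eq (hX : Measurable X) (hτ : 0 < τ)
    (hmap : Measure.map X μ = gaussianReal 0 ((τ^2).toNNReal)) {q : ℝ} (hq : 0 < q) :
    ∫ ω, |X ω| ^ q ∂μ = τ ^ q * ∫ x, |x| ^ q ∂snu := by
  have h1 : ∫ ω, |X ω| ^ q ∂μ = ∫ x, |x| ^ q ∂(Measure.map X μ) := by
    rw [integral_map hX.aemeasurable (measurable_abs_rpow hq.le).aestronglyMeasurable]
  rw [h1, hmap, gauss_scale hτ,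
    integral_map (measurable_const_mul τ).aemeasurable
      (measurable_abs_rpow hq.le).aestronglyMeasurable]
  have : ∀ y : ℝ, |τ * y| ^ q = τ ^ q * |y| ^ q := by
    intro y
    rw [abs_mul, Real.mul_rpow (abs_nonneg τ) (abs_nonneg y), abs_of_pos hτ]
  simp_rw [this]
  exact MeasureTheory.integral_const_mul _ _

lemma map_moment_integrable (hX : Measurable X) (hτ : 0 < τ)
    (hmap : Measure.map X μ = gaussianReal 0 ((τ^2).toNNReal)) {q : ℝ} (hq : 0 < q) :
    Integrable (fun ω => |X ω| ^ q) μ := by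
  have h2 : Integrable (fun x => |x| ^ q) (Measure.map X μ) := by
    rw [hmap, gauss_scale hτ]
    rw [integrable_map_measure (measurable_abs_rpow hq.le).aestronglyMeasurable
      (measurable_const_mul τ).aemeasurable]
    have : ((fun x : ℝ => |x| ^ q) ∘ (fun y : ℝ => τ * y)) = fun y => τ ^ q * |y| ^ q := by
      ext y
      simp only [Function.comp_apply]
      rw [abs_mul, Real.mul_rpow (abs_nonneg τ) (abs_nonneg y), abs_of_pos hτ]
    rw [this]
    exact (snu_integrable_abs_rpow hq).const_mul _
  rw [integrable_map_measure (measurable_abs_rpow hq.le).aestronglyMeasurable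
    hX.aemeasurable] at h2
  exact h2

/-- Transfer of the tail bound. -/
lemma map_tail_ge (hX : Measurable X) (hτ : 0 < τ)
    (hmap : Measure.map X μ = gaussianReal 0 ((τ^2).toNNReal)) {t : ℝ} (ht : 0 ≤ t) :
    ENNReal.ofReal (rexp (-9 - (t/τ)^2)) ≤ μ {ω | t ≤ X ω} := by
  have h1 : μ {ω | t ≤ X ω} = (Measure.map X μ) (Set.Ici t) := by
    rw [Measure.map_apply hX measurableSet_Ici]
    rfl
  have h2 : (fun y : ℝ => τ * y) ⁻¹' (Set.Ici t) = Set.Ici (t/τ) := by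
    ext y
    simp only [Set.mem_preimage, Set.mem_Ici]
    rw [div_le_iff₀ hτ]
    constructor <;> intro h <;> nlinarith
  rw [h1, hmap, gauss_scale hτ, Measure.map_apply (measurable_const_mul τ) measurableSet_Ici, h2]
  exact snu_tail (by positivity)

end transfer
lemma one_sub_exp_ge {δ y : ℝ} (h0 : 0 < δ) (h1 : δ ≤ 1) (h : δ ≤ y) :
    δ * rexp (-1) ≤ 1 - rexp (-y) := by
  have ha : rexp (-y) ≤ rexp (-δ) := Real.exp_le_exp.2 (by linarith)
  have hb := Real.add_one_le_exp δ
  have hc : rexp (-δ) * rexp δ = 1 := by rw [← Real.exp_add]; simp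
  have h5 : rexp (-δ) * (δ + 1) ≤ rexp (-δ) * rexp δ :=
    mul_le_mul_of_nonneg_left hb (Real.exp_pos _).le
  rw [hc] at h5
  have h6 : rexp (-1) ≤ rexp (-δ) := Real.exp_le_exp.2 (by linarith)
  nlinarith [h5, h6, ha, h0.le]

lemma exp_le_one_of_nonpos {y : ℝ} (h : y ≤ 0) : rexp y ≤ 1 := by
  rw [show (1:ℝ) = rexp 0 by simp]
  exact Real.exp_le_exp.2 h

section mainlemmas

variable {Ω : Type} [MeasurableSpace Ω] {μ : Measure Ω} [IsProbabilityMeasure μ]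
variable {n : ℕ} {G : Fin n → Ω → ℝ} {σ : Fin n → ℝ} {e : Equiv.Perm (Fin n)}

set_option maxHeartbeats 1000000 in
lemma max_term_lower
    (hσ : ∀ i, 0 < σ i) (hG : ∀ i, Measurable (G i))
    (hmap : ∀ i, Measure.map (G i) μ = gaussianReal 0 (((σ i) ^ 2).toNNReal))
    (hindep : iIndepFun G μ)
    (hmono : ∀ i j : Fin n, i ≤ j → σ (e j) ≤ σ (e i))
    {f : Ω → ℝ} (hf_int : Integrable f μ) (hf_nonneg : ∀ ω, 0 ≤ f ω)
    (hf_ge : ∀ j ω, |G j ω| ≤ f ω) (i₀ : Fin n) :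
    σ (e i₀) * Real.sqrt (Real.log (((i₀:ℕ):ℝ) + 2)) ≤ rexp 12 * ∫ ω, f ω ∂μ := by
  set k : ℕ := (i₀ : ℕ) + 1 with hk
  have hkcast : ((k:ℝ) + 1) = ((i₀:ℕ):ℝ) + 2 := by push_cast [hk]; ring
  set L : ℝ := Real.log ((k:ℝ) + 1) with hLdef
  have hkpos : (0:ℝ) < (k:ℝ) + 1 := by positivity
  have hL0 : 0 ≤ L := Real.log_nonneg (by push_cast; linarith)
  set u : ℝ := Real.sqrt (L/2) with hu
  have hu0 : 0 ≤ u := Real.sqrt_nonneg _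
  have hu2 : u^2 = L/2 := Real.sq_sqrt (by linarith)
  set t : ℝ := σ (e i₀) * u with htdef
  have ht0 : 0 ≤ t := mul_nonneg (hσ _).le hu0
  set x : ℝ := rexp (-9 - u^2) with hxdef
  have hx0 : 0 < x := Real.exp_pos _
  have hx1 : x ≤ 1 := exp_le_one_of_nonpos (by nlinarith [sq_nonneg u])
  set F : Fin n → Set Ω := fun i => {ω | G i ω < t} with hF
  have hFmeas : ∀ i, MeasurableSet (F i) := fun i => measurableSet_lt (hG i) measurable_const
  set B : Set Ω := ⋂ j ∈ Finset.Iic i₀, F (e j) with hBdef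
  have hBmeas : MeasurableSet B := Finset.measurableSet_biInter _ (fun j _ => hFmeas _)
  have hprod : μ B = ∏ j ∈ Finset.Iic i₀, μ (F (e j)) := by
    have h1 : μ (⋂ i ∈ (Finset.Iic i₀).image e, F i)
        = ∏ i ∈ (Finset.Iic i₀).image e, μ (F i) := by
      apply hindep.meas_biInter
      intro i _
      exact ⟨Set.Iio t, measurableSet_Iio, rfl⟩
    have hseteq : (⋂ i ∈ (Finset.Iic i₀).image e, F i) = B := by
      ext ω
      simp only [Set.mem_iInter, Finset.mem_image, hBdef]
      constructor
      · intro h j hj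
        exact h (e j) ⟨j, hj, rfl⟩
      · rintro h i ⟨j, hj, rfl⟩
        exact h j hj
    rw [hseteq] at h1
    rw [h1, Finset.prod_image (fun a _ b _ hab => e.injective hab)]
  have hfac : ∀ j ∈ Finset.Iic i₀, μ (F (e j)) ≤ ENNReal.ofReal (1 - x) := by
    intro j hj
    have hji : σ (e i₀) ≤ σ (e j) := hmono j i₀ (Finset.mem_Iic.1 hj)
    have hcompl : F (e j) = {ω | t ≤ G (e j) ω}ᶜ := by
      ext ω
      simp [hF, not_le]
    have hmeas2 : MeasurableSet {ω | t ≤ G (e j) ω} := by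
      have h0 : {ω | t ≤ G (e j) ω} = (G (e j)) ⁻¹' (Set.Ici t) := rfl
      rw [h0]
      exact (hG (e j)) measurableSet_Ici
    rw [hcompl, prob_compl_eq_one_sub hmeas2]
    have htail := map_tail_ge (hG (e j)) (hσ (e j)) (hmap (e j)) ht0
    have hxle : ENNReal.ofReal x ≤ μ {ω | t ≤ G (e j) ω} := by
      refine le_trans ?_ htail
      apply ENNReal.ofReal_le_ofReal
      apply Real.exp_le_exp.2
      have hdivle : t / σ (e j) ≤ u := by
        rw [div_le_iff₀ (hσ (e j))]
        rw [htdef]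
        nlinarith [mul_le_mul_of_nonneg_left hji hu0, hu0, hσ (e i₀), hσ (e j)]
      have hdiv0 : 0 ≤ t / σ (e j) := div_nonneg ht0 (hσ (e j)).le
      nlinarith [hdivle, hdiv0]
    calc (1:ℝ≥0∞) - μ {ω | t ≤ G (e j) ω} ≤ 1 - ENNReal.ofReal x :=
          tsub_le_tsub_left hxle 1
      _ = ENNReal.ofReal (1 - x) := by
          rw [← ENNReal.ofReal_one, ← ENNReal.ofReal_sub _ hx0.le]
  have hB : μ B ≤ ENNReal.ofReal ((1-x)^k) := by
    rw [hprod]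
    calc ∏ j ∈ Finset.Iic i₀, μ (F (e j)) ≤ ∏ _j ∈ Finset.Iic i₀, ENNReal.ofReal (1-x) :=
          Finset.prod_le_prod' hfac
      _ = ENNReal.ofReal (1-x) ^ k := by rw [Finset.prod_const, Fin.card_Iic]
      _ = ENNReal.ofReal ((1-x)^k) := (ENNReal.ofReal_pow (by linarith) k).symm
  have hBc : ENNReal.ofReal (1 - (1-x)^k) ≤ μ Bᶜ := by
    rw [prob_compl_eq_one_sub hBmeas]
    calc ENNReal.ofReal (1 - (1-x)^k)
        = 1 - ENNReal.ofReal ((1-x)^k) := by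
          rw [← ENNReal.ofReal_one, ← ENNReal.ofReal_sub _ (pow_nonneg (by linarith) k)]
      _ ≤ 1 - μ B := tsub_le_tsub_left hB 1
  have hpow1 : (1-x)^k ≤ 1 := pow_le_one₀ (by linarith : (0:ℝ) ≤ 1 - x) (by linarith : (1:ℝ)-x ≤ 1)
  have hP : 1 - (1-x)^k ≤ (μ Bᶜ).toReal := by
    have h2 := ENNReal.toReal_mono (measure_ne_top μ _) hBc
    rwa [ENNReal.toReal_ofReal (by linarith)] at h2
  have hIub : t * (μ Bᶜ).toReal ≤ ∫ ω, f ω ∂μ := by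
    have hsub : ∀ ω ∈ Bᶜ, t ≤ f ω := by
      intro ω hω
      rw [hBdef] at hω
      simp only [Set.mem_compl_iff, Set.mem_iInter, not_forall] at hω
      obtain ⟨j, hj, hωj⟩ := hω
      have h0 : t ≤ G (e j) ω := by
        simp only [hF, Set.mem_setOf_eq, not_lt] at hωj
        exact hωj
      exact h0.trans ((le_abs_self _).trans (hf_ge (e j) ω))
    have h1 := setIntegral_ge_of_const_le_real hBmeas.compl (measure_ne_top μ _) hsub
      hf_int.integrableOn
    exact h1.trans (setIntegral_le_integral hf_int (Filter.Eventually.of_forall hf_nonneg))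
  have hk1 : (1:ℝ) ≤ (k:ℝ) := by
    rw [hk]; push_cast; linarith [(Nat.cast_nonneg (i₀ : ℕ) : (0:ℝ) ≤ ((i₀:ℕ):ℝ))]
  set w : ℝ := rexp (-(L/2)) with hwdef
  have hw0 : 0 < w := Real.exp_pos _
  have hxw : x = rexp (-9) * w := by
    rw [hxdef, hu2, hwdef, ← Real.exp_add]
    ring_nf
  have hw2 : w^2 = ((k:ℝ)+1)⁻¹ := by
    have h1 : w * w = rexp (-(L/2) + -(L/2)) := by rw [Real.exp_add]
    have h2 : -(L/2) + -(L/2) = -L := by ring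
    rw [sq, h1, h2, Real.exp_neg, hLdef, Real.exp_log hkpos]
  have hkw : rexp (-1) ≤ (k:ℝ) * w := by
    by_contra hlt
    push_neg at hlt
    have hkw0 : (0:ℝ) ≤ (k:ℝ)*w := by positivity
    have hsq : ((k:ℝ)*w)^2 < rexp (-1)^2 := by nlinarith [Real.exp_pos (-1)]
    have hval : ((k:ℝ)*w)^2 = (k:ℝ)^2 * ((k:ℝ)+1)⁻¹ := by rw [mul_pow, hw2]
    have hbig : (1:ℝ)/2 ≤ (k:ℝ)^2 * ((k:ℝ)+1)⁻¹ := by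
      have h3 : (k:ℝ)^2 * ((k:ℝ)+1)⁻¹ = (k:ℝ)^2/((k:ℝ)+1) := (div_eq_mul_inv _ _).symm
      rw [h3, le_div_iff₀ hkpos]
      nlinarith [hk1]
    have hexp1 : rexp (-1) * rexp 1 = 1 := by rw [← Real.exp_add]; simp
    have hre : rexp (-1) ≤ 1/2 := by
      have h2e : (2:ℝ) ≤ rexp 1 := by nlinarith [Real.exp_one_gt_d9]
      nlinarith [mul_le_mul_of_nonneg_left h2e (Real.exp_pos (-1)).le, hexp1]
    nlinarith [hsq, hbig, hval, Real.exp_pos (-1), hre]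
  have hkx : rexp (-10) ≤ (k:ℝ) * x := by
    have h1 : rexp (-10) = rexp (-9) * rexp (-1) := by rw [← Real.exp_add]; norm_num
    rw [h1, hxw]
    calc rexp (-9) * rexp (-1) ≤ rexp (-9) * ((k:ℝ) * w) :=
          mul_le_mul_of_nonneg_left hkw (Real.exp_pos _).le
      _ = (k:ℝ) * (rexp (-9) * w) := by ring
  have hprob : rexp (-11) ≤ (μ Bᶜ).toReal := by
    have hchain : (1-x)^k ≤ rexp (-((k:ℝ)*x)) := by
      have h1 : (1-x) ≤ rexp (-x) := by nlinarith [Real.add_one_le_exp (-x)]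
      calc (1-x)^k ≤ rexp (-x)^k := pow_le_pow_left₀ (by linarith) h1 k
        _ = rexp ((k:ℕ) * (-x)) := (Real.exp_nat_mul (-x) k).symm
        _ = rexp (-((k:ℝ)*x)) := by ring_nf
    have hduse := one_sub_exp_ge (δ := rexp (-10)) (Real.exp_pos _)
      (exp_le_one_of_nonpos (by norm_num)) hkx
    have h2 : rexp (-11) = rexp (-10) * rexp (-1) := by rw [← Real.exp_add]; norm_num
    rw [h2]
    calc rexp (-10) * rexp (-1) ≤ 1 - rexp (-((k:ℝ)*x)) := hduse
      _ ≤ 1 - (1-x)^k := by linarith [hchain]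
      _ ≤ (μ Bᶜ).toReal := hP
  have hI0 : (0:ℝ) ≤ ∫ ω, f ω ∂μ := integral_nonneg hf_nonneg
  have hfinal : σ (e i₀) * u * rexp (-11) ≤ ∫ ω, f ω ∂μ := by
    calc σ (e i₀) * u * rexp (-11) ≤ t * (μ Bᶜ).toReal := by
          rw [htdef]
          exact mul_le_mul_of_nonneg_left hprob ht0
      _ ≤ ∫ ω, f ω ∂μ := hIub
  have hsqrt2 : Real.sqrt 2 ≤ rexp 1 := by
    have h1 : Real.sqrt 2 ≤ Real.sqrt (rexp 1 ^ 2) :=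
      Real.sqrt_le_sqrt (by nlinarith [Real.exp_one_gt_d9])
    rwa [Real.sqrt_sq (Real.exp_nonneg 1)] at h1
  have huL : Real.sqrt L * rexp (-1) ≤ u := by
    have h3 : rexp (-1) ≤ (Real.sqrt 2)⁻¹ := by
      rw [Real.exp_neg]
      exact inv_anti₀ (by positivity) hsqrt2
    calc Real.sqrt L * rexp (-1) ≤ Real.sqrt L * (Real.sqrt 2)⁻¹ :=
          mul_le_mul_of_nonneg_left h3 (Real.sqrt_nonneg L)
      _ = Real.sqrt L / Real.sqrt 2 := (div_eq_mul_inv _ _).symm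
      _ = u := by rw [hu, Real.sqrt_div hL0]
  have hlog : Real.log (((i₀:ℕ):ℝ) + 2) = L := by rw [hLdef, hkcast]
  rw [hlog]
  have h2 : σ (e i₀) * Real.sqrt L * (rexp (-1) * rexp (-11)) ≤ ∫ ω, f ω ∂μ := by
    calc σ (e i₀) * Real.sqrt L * (rexp (-1) * rexp (-11))
        = (σ (e i₀) * (Real.sqrt L * rexp (-1))) * rexp (-11) := by ring
      _ ≤ (σ (e i₀) * u) * rexp (-11) := by
          apply mul_le_mul_of_nonneg_right _ (Real.exp_pos _).le
          exact mul_le_mul_of_nonneg_left huL (hσ _).le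
      _ ≤ ∫ ω, f ω ∂μ := hfinal
  have h3 : rexp (-1) * rexp (-11) = rexp (-12) := by rw [← Real.exp_add]; norm_num
  rw [h3] at h2
  have h4 : rexp (-12) * rexp 12 = 1 := by rw [← Real.exp_add]; norm_num
  have h5 := mul_le_mul_of_nonneg_right h2 (Real.exp_pos 12).le
  calc σ (e i₀) * Real.sqrt L = σ (e i₀) * Real.sqrt L * (rexp (-12) * rexp 12) := by
        rw [h4, mul_one]
    _ = σ (e i₀) * Real.sqrt L * rexp (-12) * rexp 12 := by ring
    _ ≤ (∫ ω, f ω ∂μ) * rexp 12 := h5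
    _ = rexp 12 * ∫ ω, f ω ∂μ := by ring

end mainlemmas
lemma four_le_exp_two : (4:ℝ) ≤ rexp 2 := by
  have h := Real.exp_one_gt_d9
  have h2 : rexp 2 = rexp 1 * rexp 1 := by rw [← Real.exp_add]; norm_num
  nlinarith

lemma two_le_exp_one : (2:ℝ) ≤ rexp 1 := by nlinarith [Real.exp_one_gt_d9]

/-- Moment ratio bound: `γ_{2p} ≤ (1/16) γ_p² e^{20p}`. -/
lemma gamma_ratio {p : ℝ} (hp : 2 ≤ p) :
    (∫ x, |x| ^ (2*p) ∂snu) ≤ (1/16) * (∫ x, |x| ^ p ∂snu)^2 * rexp (20*p) := by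
  have hp0 : (0:ℝ) < p := by linarith
  have h2p : (0:ℝ) < 2*p := by linarith
  have hup := snu_moment_le h2p
  have hlo := snu_moment_ge hp0
  have hlo_nn : (0:ℝ) ≤ p ^ (p/2) * rexp (-9 - p) := by positivity
  have hsq : (p ^ (p/2) * rexp (-9 - p))^2 ≤ (∫ x, |x| ^ p ∂snu)^2 :=
    pow_le_pow_left₀ hlo_nn hlo 2
  have key : (2*(2*p)/rexp 1) ^ ((2*p)/2) * 4
      ≤ (1/16) * (p ^ (p/2) * rexp (-9 - p))^2 * rexp (20*p) := by
    have hA : (2*(2*p)/rexp 1) ^ ((2*p)/2) = (4*p/rexp 1) ^ p := by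
      rw [show (2*(2*p)) = 4*p by ring, show (2*p)/2 = p by ring]
    have hB : (4*p/rexp 1) ^ p = 4 ^ p * p ^ p * rexp (-p) := by
      rw [show (4*p/rexp 1) = 4 * p * (rexp 1)⁻¹ by ring,
        Real.mul_rpow (by positivity) (by positivity),
        Real.mul_rpow (by norm_num) hp0.le, ← Real.exp_neg, ← Real.exp_mul,
        show (-1) * p = -p by ring]
    have hC : (p ^ (p/2) * rexp (-9 - p))^2 = p ^ p * rexp (-18 - 2*p) := by
      rw [mul_pow, ← Real.rpow_natCast (p ^ (p/2)) 2, ← Real.rpow_mul hp0.le,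
        show (p/2) * ((2:ℕ):ℝ) = p by push_cast; ring,
        sq, ← Real.exp_add, show (-9 - p) + (-9 - p) = -18 - 2*p by ring]
    rw [hA, hB, hC]
    have h4p : (4:ℝ) ^ p ≤ rexp (2*p) := by
      calc (4:ℝ) ^ p ≤ rexp 2 ^ p :=
            Real.rpow_le_rpow (by norm_num) four_le_exp_two hp0.le
        _ = rexp (2*p) := (Real.exp_mul 2 p).symm
    have h64 : (64:ℝ) ≤ rexp (17*p - 18) := by
      have h1 : (64:ℝ) ≤ rexp 16 := by
        have h2 : rexp 16 = rexp 1 ^ (16:ℕ) := by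
          rw [← Real.exp_nat_mul]; norm_num
        have h3 : (2:ℝ) ^ (16:ℕ) ≤ rexp 1 ^ (16:ℕ) :=
          pow_le_pow_left₀ (by norm_num) two_le_exp_one 16
        rw [h2]
        calc (64:ℝ) ≤ 2 ^ (16:ℕ) := by norm_num
          _ ≤ rexp 1 ^ (16:ℕ) := h3
      calc (64:ℝ) ≤ rexp 16 := h1
        _ ≤ rexp (17*p - 18) := Real.exp_le_exp.2 (by linarith)
    -- reduce: 4·4^p·p^p·e^{-p} ≤ (1/16)·p^p·e^{-18-2p}·e^{20p}
    have hscal : 4 * (4:ℝ)^p * rexp (-p) ≤ (1/16) * (rexp (-18 - 2*p) * rexp (20*p)) := by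
      have hmerge : rexp (-18 - 2*p) * rexp (20*p) = rexp p * rexp (17*p - 18) := by
        rw [← Real.exp_add, ← Real.exp_add]
        congr 1
        ring
      rw [hmerge]
      have step1 : 4 * (4:ℝ)^p * rexp (-p) ≤ 4 * rexp (2*p) * rexp (-p) := by
        have := mul_le_mul_of_nonneg_right
          (mul_le_mul_of_nonneg_left h4p (by norm_num : (0:ℝ) ≤ 4)) (Real.exp_pos (-p)).le
        linarith
      have step2 : 4 * rexp (2*p) * rexp (-p) = 4 * rexp p := by
        rw [mul_assoc, ← Real.exp_add, show 2*p + -p = p by ring]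
      have step3 : 4 * rexp p ≤ (1/16) * (rexp p * rexp (17*p - 18)) := by
        have := mul_le_mul_of_nonneg_left h64 (Real.exp_pos p).le
        nlinarith [Real.exp_pos p]
      linarith [step1, step2.le, step3, step2.ge]
    calc 4 ^ p * p ^ p * rexp (-p) * 4
        = p ^ p * (4 * (4:ℝ)^p * rexp (-p)) := by ring
      _ ≤ p ^ p * ((1/16) * (rexp (-18 - 2*p) * rexp (20*p))) :=
          mul_le_mul_of_nonneg_left hscal (Real.rpow_nonneg hp0.le p)
      _ = (1/16) * (p ^ p * rexp (-18 - 2*p)) * rexp (20*p) := by ring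
  calc (∫ x, |x| ^ (2*p) ∂snu) ≤ (2*(2*p)/rexp 1) ^ ((2*p)/2) * 4 := hup
    _ ≤ (1/16) * (p ^ (p/2) * rexp (-9 - p))^2 * rexp (20*p) := key
    _ ≤ (1/16) * (∫ x, |x| ^ p ∂snu)^2 * rexp (20*p) := by
        apply mul_le_mul_of_nonneg_right _ (Real.exp_pos _).le
        apply mul_le_mul_of_nonneg_left hsq (by norm_num)
section taillemma

variable {Ω : Type} [MeasurableSpace Ω] {μ : Measure Ω} [IsProbabilityMeasure μ]
variable {n : ℕ} {G : Fin n → Ω → ℝ} {σ : Fin n → ℝ} {e : Equiv.Perm (Fin n)}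

set_option maxHeartbeats 2000000 in
lemma tail_term_lower
    (hσ : ∀ i, 0 < σ i) (hG : ∀ i, Measurable (G i))
    (hmap : ∀ i, Measure.map (G i) μ = gaussianReal 0 (((σ i) ^ 2).toNNReal))
    (hindep : iIndepFun G μ)
    (hmono : ∀ i j : Fin n, i ≤ j → σ (e j) ≤ σ (e i))
    {p : ℝ} (hp : 2 ≤ p)
    {f : Ω → ℝ} (hf_int : Integrable f μ) (hf_nonneg : ∀ ω, 0 ≤ f ω)
    (hf_ge1 : ∀ j ω, |G j ω| ≤ f ω)
    (hf_gep : ∀ ω (s : Finset (Fin n)), (∑ i ∈ s, |G i ω| ^ p) ^ (1/p) ≤ f ω) :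
    Real.sqrt p *
        (∑ i : Fin n, if Real.exp p ≤ (((i:ℕ):ℝ) + 1 : ℝ) then σ (e i) ^ p else 0) ^ (1/p)
      ≤ rexp 32 * ∫ ω, f ω ∂μ := by
  classical
  have hp0 : (0:ℝ) < p := by linarith
  have hip0 : (0:ℝ) < 1/p := by positivity
  have hI0 : (0:ℝ) ≤ ∫ ω, f ω ∂μ := integral_nonneg hf_nonneg
  set Tfin : Finset (Fin n) :=
    Finset.univ.filter (fun i : Fin n => Real.exp p ≤ (((i:ℕ):ℝ) + 1 : ℝ)) with hTfin
  have hsum_eq : (∑ i : Fin n, if Real.exp p ≤ (((i:ℕ):ℝ) + 1 : ℝ) then σ (e i) ^ p else 0)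
      = ∑ i ∈ Tfin, σ (e i) ^ p := by
    rw [hTfin, Finset.sum_filter]
  rw [hsum_eq]
  set T : ℝ := ∑ i ∈ Tfin, σ (e i) ^ p with hT
  have hT0 : 0 ≤ T := Finset.sum_nonneg (fun i _ => Real.rpow_nonneg (hσ _).le p)
  rcases Finset.eq_empty_or_nonempty Tfin with hemp | hne
  · rw [hT, hemp]
    simp only [Finset.sum_empty]
    rw [Real.zero_rpow (ne_of_gt hip0), mul_zero]
    positivity
  -- nonempty tail
  set m₀ : Fin n := Tfin.min' hne with hm₀
  have hm₀T : m₀ ∈ Tfin := Finset.min'_mem _ _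
  set s₀ : ℝ := σ (e m₀) with hs₀def
  have hs₀ : 0 < s₀ := hσ _
  have hs_le : ∀ i ∈ Tfin, σ (e i) ≤ s₀ := fun i hi => hmono m₀ i (Finset.min'_le _ i hi)
  have hlogm : p ≤ Real.log (((m₀:ℕ):ℝ) + 2) := by
    have h1 : Real.exp p ≤ ((m₀:ℕ):ℝ) + 1 := (Finset.mem_filter.1 hm₀T).2
    have h1' : Real.exp p ≤ ((m₀:ℕ):ℝ) + 2 := by linarith
    have h2 := Real.log_le_log (Real.exp_pos p) h1'
    rwa [Real.log_exp] at h2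
  have hM := max_term_lower hσ hG hmap hindep hmono hf_int hf_nonneg hf_ge1 m₀
  have hsp_le : Real.sqrt p ≤ Real.sqrt (Real.log (((m₀:ℕ):ℝ) + 2)) :=
    Real.sqrt_le_sqrt hlogm
  by_cases hcase : T ≤ rexp (20*p) * s₀ ^ p
  · -- small tail: dominated by max term
    have h2 : (rexp (20*p) * s₀ ^ p) ^ (1/p) = rexp 20 * s₀ := by
      rw [Real.mul_rpow (Real.exp_pos _).le (Real.rpow_nonneg hs₀.le _),
        ← Real.exp_mul, ← Real.rpow_mul hs₀.le,
        show 20*p*(1/p) = 20 by field_simp,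
        show p*(1/p) = 1 by field_simp, Real.rpow_one]
    have h1 : T ^ (1/p) ≤ rexp 20 * s₀ := by
      calc T ^ (1/p) ≤ (rexp (20*p) * s₀ ^ p) ^ (1/p) :=
            Real.rpow_le_rpow hT0 hcase hip0.le
        _ = rexp 20 * s₀ := h2
    calc Real.sqrt p * T ^ (1/p) ≤ Real.sqrt p * (rexp 20 * s₀) :=
          mul_le_mul_of_nonneg_left h1 (Real.sqrt_nonneg p)
      _ ≤ Real.sqrt (Real.log (((m₀:ℕ):ℝ) + 2)) * (rexp 20 * s₀) :=
          mul_le_mul_of_nonneg_right hsp_le (by positivity)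
      _ = rexp 20 * (s₀ * Real.sqrt (Real.log (((m₀:ℕ):ℝ) + 2))) := by ring
      _ ≤ rexp 20 * (rexp 12 * ∫ ω, f ω ∂μ) :=
          mul_le_mul_of_nonneg_left hM (Real.exp_pos _).le
      _ = rexp 32 * ∫ ω, f ω ∂μ := by
          rw [← mul_assoc, ← Real.exp_add]
          norm_num
  · -- large tail: Paley–Zygmund
    push_neg at hcase
    have hT_pos : 0 < T := lt_trans (by positivity) hcase
    set g : Fin n → Ω → ℝ := fun i ω => |G (e i) ω| ^ p with hg
    have hgnn : ∀ i ω, 0 ≤ g i ω := fun i ω => Real.rpow_nonneg (abs_nonneg _) p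
    have hgmeas : ∀ i, Measurable (g i) :=
      fun i => (measurable_abs_rpow hp0.le).comp (hG (e i))
    have hgint : ∀ i, Integrable (g i) μ :=
      fun i => map_moment_integrable (hG (e i)) (hσ (e i)) (hmap (e i)) hp0
    have h2p0 : (0:ℝ) < 2*p := by linarith
    have hsq_eq : ∀ (a : ℝ), |a| ^ p * |a| ^ p = |a| ^ (2*p) := by
      intro a
      rw [← Real.rpow_add' (abs_nonneg a) (by positivity : p + p ≠ 0),
        show p + p = 2*p by ring]
    have hg2int : ∀ i, Integrable (fun ω => g i ω * g i ω) μ := by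
      intro i
      have h1 := map_moment_integrable (hG (e i)) (hσ (e i)) (hmap (e i)) h2p0
      apply h1.congr
      filter_upwards with ω
      rw [hg]
      exact (hsq_eq (G (e i) ω)).symm
    have hindep_pair : ∀ i j : Fin n, i ≠ j → IndepFun (g i) (g j) μ := by
      intro i j hij
      have h1 : IndepFun (G (e i)) (G (e j)) μ :=
        hindep.indepFun (fun h => hij (e.injective h))
      exact h1.comp (measurable_abs_rpow hp0.le) (measurable_abs_rpow hp0.le)
    have hgij_int : ∀ i j : Fin n, Integrable (fun ω => g i ω * g j ω) μ := by
      intro i j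
      by_cases hij : i = j
      · subst hij; exact hg2int i
      · exact (hindep_pair i j hij).integrable_mul (hgint i) (hgint j)
    set γp : ℝ := ∫ x, |x| ^ p ∂snu with hγp
    set γ2p : ℝ := ∫ x, |x| ^ (2*p) ∂snu with hγ2p
    have hγp_pos : 0 < γp := snu_moment_pos hp0
    have hγ2p_pos : 0 < γ2p := snu_moment_pos h2p0
    have hEg : ∀ i, ∫ ω, g i ω ∂μ = σ (e i) ^ p * γp :=
      fun i => map_moment_eq (hG (e i)) (hσ (e i)) (hmap (e i)) hp0
    have hEg_nn : ∀ i, 0 ≤ ∫ ω, g i ω ∂μ :=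
      fun i => integral_nonneg (fun ω => hgnn i ω)
    have hEg2 : ∀ i, ∫ ω, g i ω * g i ω ∂μ = σ (e i) ^ (2*p) * γ2p := by
      intro i
      have h1 := map_moment_eq (hG (e i)) (hσ (e i)) (hmap (e i)) h2p0
      rw [← h1]
      apply integral_congr_ae
      filter_upwards with ω
      rw [hg]
      exact hsq_eq (G (e i) ω)
    set S : Ω → ℝ := fun ω => ∑ i ∈ Tfin, g i ω with hS
    have hSnn : ∀ ω, 0 ≤ S ω := fun ω => Finset.sum_nonneg (fun i _ => hgnn i ω)
    have hSmeas : Measurable S := Finset.measurable_sum _ (fun i _ => hgmeas i)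
    have hSint : Integrable S μ := integrable_finset_sum _ (fun i _ => hgint i)
    have hES : ∫ ω, S ω ∂μ = γp * T := by
      rw [hS]
      rw [integral_finset_sum _ (fun i _ => hgint i)]
      rw [show ∑ i ∈ Tfin, ∫ ω, g i ω ∂μ = ∑ i ∈ Tfin, σ (e i) ^ p * γp from
        Finset.sum_congr rfl (fun i _ => hEg i)]
      rw [← Finset.sum_mul, hT]
      ring
    have hES_pos : 0 < γp * T := mul_pos hγp_pos hT_pos
    -- second moment bound
    have hSsq : ∀ ω, S ω * S ω = ∑ i ∈ Tfin, ∑ j ∈ Tfin, g i ω * g j ω := by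
      intro ω
      rw [hS, Finset.sum_mul_sum]
    have hS2int : Integrable (fun ω => S ω * S ω) μ := by
      have h1 : Integrable (fun ω => ∑ i ∈ Tfin, ∑ j ∈ Tfin, g i ω * g j ω) μ :=
        integrable_finset_sum _ (fun i _ => integrable_finset_sum _ (fun j _ => hgij_int i j))
      apply h1.congr
      filter_upwards with ω
      exact (hSsq ω).symm
    have hES2 : ∫ ω, S ω * S ω ∂μ ≤ (γp * T)^2 + γ2p * s₀ ^ p * T := by
      have h1 : ∫ ω, S ω * S ω ∂μ
          = ∑ i ∈ Tfin, ∑ j ∈ Tfin, ∫ ω, g i ω * g j ω ∂μ := by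
        rw [integral_congr_ae (Filter.Eventually.of_forall hSsq),
          integral_finset_sum _ (fun i _ => integrable_finset_sum _ (fun j _ => hgij_int i j))]
        exact Finset.sum_congr rfl (fun i _ => integral_finset_sum _ (fun j _ => hgij_int i j))
      have hterm : ∀ i ∈ Tfin, ∀ j ∈ Tfin, ∫ ω, g i ω * g j ω ∂μ
          ≤ (σ (e i) ^ p * γp) * (σ (e j) ^ p * γp)
            + (if i = j then σ (e i) ^ p * s₀ ^ p * γ2p else 0) := by
        intro i hi j hj
        by_cases hij : i = j
        · subst hij
          simp only [eq_self_iff_true, if_true]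
          rw [hEg2 i]
          have h2 : σ (e i) ^ (2*p) = σ (e i) ^ p * σ (e i) ^ p := by
            rw [← Real.rpow_add' (hσ _).le (by positivity : p + p ≠ 0),
              show p + p = 2*p by ring]
          rw [h2]
          have h3 : σ (e i) ^ p * σ (e i) ^ p * γ2p ≤ σ (e i) ^ p * s₀ ^ p * γ2p := by
            apply mul_le_mul_of_nonneg_right _ hγ2p_pos.le
            apply mul_le_mul_of_nonneg_left _ (Real.rpow_nonneg (hσ _).le p)
            exact Real.rpow_le_rpow (hσ _).le (hs_le i hi) hp0.le
          have h6 : (0:ℝ) ≤ σ (e i) ^ p * γp * (σ (e i) ^ p * γp) := by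
            have := Real.rpow_nonneg (hσ (e i)).le p
            positivity
          linarith [h3, h6]
        · simp only [if_neg hij, add_zero]
          have h4 := (hindep_pair i j hij).integral_fun_mul_eq_mul_integral (hgint i).aestronglyMeasurable (hgint j).aestronglyMeasurable
          have h5 : ∫ ω, g i ω * g j ω ∂μ = (∫ ω, g i ω ∂μ) * ∫ ω, g j ω ∂μ := h4
          rw [h5, hEg i, hEg j]
      calc ∫ ω, S ω * S ω ∂μ
          = ∑ i ∈ Tfin, ∑ j ∈ Tfin, ∫ ω, g i ω * g j ω ∂μ := h1
        _ ≤ ∑ i ∈ Tfin, ∑ j ∈ Tfin, ((σ (e i) ^ p * γp) * (σ (e j) ^ p * γp)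
              + (if i = j then σ (e i) ^ p * s₀ ^ p * γ2p else 0)) := by
            apply Finset.sum_le_sum
            intro i hi
            apply Finset.sum_le_sum
            intro j hj
            exact hterm i hi j hj
        _ = (γp * T)^2 + γ2p * s₀ ^ p * T := by
            rw [Finset.sum_congr rfl (fun i _ => Finset.sum_add_distrib)]
            rw [Finset.sum_add_distrib]
            congr 1
            · rw [show ∑ i ∈ Tfin, ∑ j ∈ Tfin, (σ (e i) ^ p * γp) * (σ (e j) ^ p * γp)
                  = (∑ i ∈ Tfin, σ (e i) ^ p * γp) * (∑ j ∈ Tfin, σ (e j) ^ p * γp) from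
                (Finset.sum_mul_sum _ _ _ _).symm]
              rw [← Finset.sum_mul, ← hT]
              ring
            · have hdiag : ∀ i ∈ Tfin,
                  (∑ j ∈ Tfin, if i = j then σ (e i) ^ p * s₀ ^ p * γ2p else 0)
                    = σ (e i) ^ p * s₀ ^ p * γ2p := by
                intro i hi
                rw [Finset.sum_ite_eq Tfin i (fun _ => σ (e i) ^ p * s₀ ^ p * γ2p),
                  if_pos hi]
              rw [Finset.sum_congr rfl hdiag, ← Finset.sum_mul, ← Finset.sum_mul, ← hT]
              ring
    -- variance
    have hvar_expand : (fun ω => (S ω - γp*T)^2)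
        = fun ω => S ω * S ω - (2*(γp*T)) * S ω + (γp*T)^2 := by
      ext ω
      ring
    have hvar_int : Integrable (fun ω => (S ω - γp*T)^2) μ := by
      rw [hvar_expand]
      exact (hS2int.sub (hSint.const_mul _)).add (integrable_const _)
    have hvar : ∫ ω, (S ω - γp*T)^2 ∂μ ≤ γ2p * s₀ ^ p * T := by
      have hint2 : Integrable (fun ω => S ω * S ω - 2*(γp*T) * S ω) μ :=
        hS2int.sub (hSint.const_mul _)
      have e1 : ∫ ω, (S ω - γp*T)^2 ∂μ
          = ∫ ω, ((S ω * S ω - 2*(γp*T) * S ω) + (γp*T)^2) ∂μ := by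
        apply integral_congr_ae
        filter_upwards with ω
        ring
      rw [e1, integral_add hint2 (integrable_const _)]
      have e2 : ∫ ω, (S ω * S ω - 2*(γp*T) * S ω) ∂μ
          = (∫ ω, S ω * S ω ∂μ) - 2*(γp*T)*(γp*T) := by
        rw [integral_sub hS2int (hSint.const_mul _), MeasureTheory.integral_const_mul, hES]
      rw [e2, integral_const]
      simp only [probReal_univ, smul_eq_mul, one_mul]
      nlinarith [hES2]
    -- Chebyshev
    set A : Set Ω := {ω | S ω < γp*T/2} with hA
    have hAmeas : MeasurableSet A := measurableSet_lt hSmeas measurable_const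
    have hcheb : (γp*T/2)^2 * (μ A).toReal ≤ γ2p * s₀ ^ p * T := by
      have h1 : ∀ ω ∈ A, (γp*T/2)^2 ≤ (S ω - γp*T)^2 := by
        intro ω hω
        have h2 : S ω < γp*T/2 := hω
        nlinarith [hSnn ω]
      have h3 := setIntegral_ge_of_const_le_real hAmeas (measure_ne_top μ _) h1
        hvar_int.integrableOn
      have h4 := setIntegral_le_integral (s := A) hvar_int
        (Filter.Eventually.of_forall (fun ω => sq_nonneg _))
      have h3' : (γp*T/2)^2 * (μ A).toReal ≤ ∫ x in A, (S x - γp*T)^2 ∂μ := h3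
      linarith
    have hkey : γ2p * s₀ ^ p * T ≤ (1/16) * (γp * T)^2 := by
      have hgr := gamma_ratio hp
      calc γ2p * s₀ ^ p * T ≤ ((1/16) * γp^2 * rexp (20*p)) * s₀ ^ p * T := by
            apply mul_le_mul_of_nonneg_right _ hT0
            exact mul_le_mul_of_nonneg_right hgr (Real.rpow_nonneg hs₀.le p)
        _ = (1/16) * γp^2 * (rexp (20*p) * s₀ ^ p) * T := by ring
        _ ≤ (1/16) * γp^2 * T * T := by
            apply mul_le_mul_of_nonneg_right _ hT0
            exact mul_le_mul_of_nonneg_left hcase.le (by positivity)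
        _ = (1/16) * (γp * T)^2 := by ring
    have hμA : (μ A).toReal ≤ 1/4 := by
      nlinarith [hcheb, hkey, hES_pos, ENNReal.toReal_nonneg (a := μ A),
        mul_pos hES_pos hES_pos]
    have hμAc : (3:ℝ)/4 ≤ (μ Aᶜ).toReal := by
      have h1 : μ Aᶜ = 1 - μ A := prob_compl_eq_one_sub hAmeas
      have h2 : (μ A) ≤ 1 := prob_le_one
      rw [h1, ENNReal.toReal_sub_of_le h2 ENNReal.one_ne_top]
      simp only [ENNReal.toReal_one]
      linarith [hμA]
    have hc0 : (0:ℝ) ≤ γp*T/2 := by positivity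
    have hIlow : (γp*T/2)^(1/p) * (3/4) ≤ ∫ ω, f ω ∂μ := by
      have h1 : ∀ ω ∈ Aᶜ, (γp*T/2)^(1/p) ≤ f ω := by
        intro ω hω
        have h2 : γp*T/2 ≤ S ω := by
          simp only [hA, Set.mem_compl_iff, Set.mem_setOf_eq, not_lt] at hω
          exact hω
        have h3 : (γp*T/2)^(1/p) ≤ S ω ^ (1/p) :=
          Real.rpow_le_rpow hc0 h2 hip0.le
        refine h3.trans ?_
        have h4 : S ω = ∑ j ∈ Tfin.image e, |G j ω| ^ p := by
          rw [hS, Finset.sum_image (fun a _ b _ hab => e.injective hab)]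
        rw [h4]
        exact hf_gep ω (Tfin.image e)
      have h5 := setIntegral_ge_of_const_le_real hAmeas.compl (measure_ne_top μ _) h1
        hf_int.integrableOn
      have h6 := setIntegral_le_integral (s := Aᶜ) hf_int
        (Filter.Eventually.of_forall hf_nonneg)
      have h7 : (γp*T/2)^(1/p) * (3/4) ≤ (γp*T/2)^(1/p) * (μ Aᶜ).toReal :=
        mul_le_mul_of_nonneg_left hμAc (Real.rpow_nonneg hc0 _)
      have h5' : (γp*T/2)^(1/p) * (μ Aᶜ).toReal ≤ ∫ x in Aᶜ, f x ∂μ := h5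
      linarith
    -- convert to √p T^{1/p}
    have hγlow : p ^ (p/2) * rexp (-10-p) ≤ γp/2 := by
      have h1 := snu_moment_ge hp0
      have h2 : rexp (-10-p) * 2 ≤ rexp (-9-p) := by
        have h3 : rexp (-10-p) * 2 ≤ rexp (-10-p) * rexp 1 :=
          mul_le_mul_of_nonneg_left two_le_exp_one (Real.exp_pos _).le
        rw [← Real.exp_add, show -10-p+1 = -9-p by ring] at h3
        exact h3
      have h4 : rexp (-9 - p) = rexp (-9-p) := by norm_num
      nlinarith [Real.rpow_nonneg hp0.le (p/2), h1, h2]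
    have hsqfac : Real.sqrt p * rexp (-6) ≤ (γp/2)^(1/p) := by
      have h2 : (p ^ (p/2) * rexp (-10-p)) ^ (1/p) ≤ (γp/2)^(1/p) :=
        Real.rpow_le_rpow (by positivity) hγlow hip0.le
      have h3 : (p ^ (p/2) * rexp (-10-p)) ^ (1/p)
          = p^((1:ℝ)/2) * rexp ((-10-p)*(1/p)) := by
        rw [Real.mul_rpow (by positivity) (Real.exp_pos _).le,
          ← Real.rpow_mul hp0.le, ← Real.exp_mul,
          show (p/2)*(1/p) = 1/2 by field_simp]
      have h4 : rexp (-6) ≤ rexp ((-10-p)*(1/p)) := by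
        apply Real.exp_le_exp.2
        rw [show (-10-p)*(1/p) = -(10/p) - 1 by field_simp]
        have h5 : 10/p ≤ 5 := by
          rw [div_le_iff₀ hp0]
          linarith
        linarith
      have h6 : Real.sqrt p * rexp (-6) ≤ p^((1:ℝ)/2) * rexp ((-10-p)*(1/p)) := by
        rw [Real.sqrt_eq_rpow]
        exact mul_le_mul_of_nonneg_left h4 (Real.rpow_nonneg hp0.le _)
      rw [← h3] at h6
      exact h6.trans h2
    have hfactor : Real.sqrt p * rexp (-6) * T^(1/p) ≤ (γp*T/2)^(1/p) := by
      have h1 : γp*T/2 = (γp/2) * T := by ring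
      rw [h1, Real.mul_rpow (by positivity) hT0]
      exact mul_le_mul_of_nonneg_right hsqfac (Real.rpow_nonneg hT0 _)
    have hmain : Real.sqrt p * T^(1/p) * (rexp (-6) * (3/4)) ≤ ∫ ω, f ω ∂μ := by
      calc Real.sqrt p * T^(1/p) * (rexp (-6) * (3/4))
          = (Real.sqrt p * rexp (-6) * T^(1/p)) * (3/4) := by ring
        _ ≤ (γp*T/2)^(1/p) * (3/4) :=
            mul_le_mul_of_nonneg_right hfactor (by norm_num)
        _ ≤ ∫ ω, f ω ∂μ := hIlow
    have hre : rexp (-1) ≤ (3:ℝ)/4 := by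
      have h1 : rexp (-1) * rexp 1 = 1 := by rw [← Real.exp_add]; simp
      nlinarith [two_le_exp_one, Real.exp_pos (-1)]
    have hc32 : rexp (-32) ≤ rexp (-6) * (3/4) := by
      calc rexp (-32) ≤ rexp (-7) := Real.exp_le_exp.2 (by norm_num)
        _ = rexp (-6) * rexp (-1) := by rw [← Real.exp_add]; norm_num
        _ ≤ rexp (-6) * (3/4) := mul_le_mul_of_nonneg_left hre (Real.exp_pos _).le
    have h8 : Real.sqrt p * T^(1/p) * rexp (-32) ≤ ∫ ω, f ω ∂μ := by
      have h9 : Real.sqrt p * T^(1/p) * rexp (-32)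
          ≤ Real.sqrt p * T^(1/p) * (rexp (-6) * (3/4)) :=
        mul_le_mul_of_nonneg_left hc32 (by positivity)
      linarith [hmain]
    have h9 : rexp (-32) * rexp 32 = 1 := by rw [← Real.exp_add]; norm_num
    calc Real.sqrt p * T^(1/p)
        = Real.sqrt p * T^(1/p) * (rexp (-32) * rexp 32) := by rw [h9, mul_one]
      _ = (Real.sqrt p * T^(1/p) * rexp (-32)) * rexp 32 := by ring
      _ ≤ (∫ ω, f ω ∂μ) * rexp 32 :=
          mul_le_mul_of_nonneg_right h8 (Real.exp_pos _).le
      _ = rexp 32 * ∫ ω, f ω ∂μ := by ring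

end taillemma

set_option maxHeartbeats 1000000 in
/-- Lower bound for the expected `ℓ_p` norm of a vector of independent Gaussians
`G_i ~ N(0, σ_i²)`, `2 ≤ p < ∞`:
`E‖G‖_{ℓ_p} ≥ c (max_{i ≤ e^p} σ_i^* √(log(i+1)) + √p (∑_{i ≥ e^p} (σ_i^*)^p)^{1/p})`,
where `σ^* = σ ∘ e` is the nonincreasing rearrangement of `σ` (via a permutation `e`). -/
theorem stmt9 : ∃ c : ℝ, 0 < c ∧
    ∀ (Ω : Type) (_ : MeasurableSpace Ω) (μ : Measure Ω), IsProbabilityMeasure μ →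
    ∀ (n : ℕ) (G : Fin n → Ω → ℝ) (σ : Fin n → ℝ) (e : Equiv.Perm (Fin n)) (p : ℝ),
    2 ≤ p →
    (∀ i, 0 < σ i) →
    (∀ i, Measurable (G i)) →
    (∀ i, Measure.map (G i) μ = gaussianReal 0 (((σ i) ^ 2).toNNReal)) →
    iIndepFun G μ →
    (∀ i j : Fin n, i ≤ j → σ (e j) ≤ σ (e i)) →
    c * ((⨆ i : Fin n, if ((i : ℕ) + 1 : ℝ) ≤ Real.exp p then
            σ (e i) * Real.sqrt (Real.log ((i : ℕ) + 2)) else 0)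
      + Real.sqrt p *
          (∑ i : Fin n, if Real.exp p ≤ ((i : ℕ) + 1 : ℝ) then σ (e i) ^ p else 0)
            ^ (1 / p)) ≤
      ∫ ω, (∑ i, |G i ω| ^ p) ^ (1 / p) ∂μ := by
  
  refine ⟨rexp (-34), Real.exp_pos _, ?_⟩
  intro Ω mΩ μ hprob n G σ e p hp hσ hG hmap hindep hmono
  haveI := hprob
  have hp0 : (0:ℝ) < p := by linarith
  have hip0 : (0:ℝ) < 1/p := by positivity
  set f : Ω → ℝ := fun ω => (∑ i, |G i ω| ^ p) ^ (1/p) with hfdef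
  have hsumnn : ∀ ω, 0 ≤ ∑ i, |G i ω| ^ p :=
    fun ω => Finset.sum_nonneg (fun i _ => Real.rpow_nonneg (abs_nonneg _) p)
  have hf_nonneg : ∀ ω, 0 ≤ f ω := fun ω => Real.rpow_nonneg (hsumnn ω) _
  have hf_meas : Measurable f :=
    (measurable_rpow_c hip0.le).comp
      (Finset.measurable_sum _ (fun i _ => (measurable_abs_rpow hp0.le).comp (hG i)))
  have hf_ge1 : ∀ j ω, |G j ω| ≤ f ω := by
    intro j ω
    have h1 : |G j ω| ^ p ≤ ∑ i, |G i ω| ^ p :=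
      Finset.single_le_sum (f := fun i => |G i ω| ^ p)
        (fun i _ => Real.rpow_nonneg (abs_nonneg _) p) (Finset.mem_univ j)
    have h2 : (|G j ω| ^ p) ^ (1/p) ≤ f ω :=
      Real.rpow_le_rpow (Real.rpow_nonneg (abs_nonneg _) p) h1 hip0.le
    rwa [← Real.rpow_mul (abs_nonneg _), mul_one_div_cancel hp0.ne', Real.rpow_one] at h2
  have hf_gep : ∀ ω (s : Finset (Fin n)), (∑ i ∈ s, |G i ω| ^ p) ^ (1/p) ≤ f ω := by
    intro ω s
    apply Real.rpow_le_rpow (Finset.sum_nonneg (fun i _ => Real.rpow_nonneg (abs_nonneg _) p))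
      (Finset.sum_le_sum_of_subset_of_nonneg (Finset.subset_univ s)
        (fun i _ _ => Real.rpow_nonneg (abs_nonneg _) p)) hip0.le
  have hf_int : Integrable f μ := by
    have hdom : Integrable (fun ω => 1 + ∑ i, |G i ω| ^ p) μ :=
      (integrable_const 1).add (integrable_finset_sum _
        (fun i _ => map_moment_integrable (hG i) (hσ i) (hmap i) hp0))
    apply hdom.mono' hf_meas.aestronglyMeasurable
    filter_upwards with ω
    rw [Real.norm_of_nonneg (hf_nonneg ω)]
    rcases le_or_gt (∑ i, |G i ω| ^ p) 1 with h | h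
    · have h1 : f ω ≤ 1 := Real.rpow_le_one (hsumnn ω) h hip0.le
      linarith [hsumnn ω]
    · have h2 : f ω ≤ (∑ i, |G i ω| ^ p) ^ (1:ℝ) :=
        Real.rpow_le_rpow_of_exponent_le h.le
          (by rw [div_le_one hp0]; linarith)
      rw [Real.rpow_one] at h2
      linarith
  have hI0 : (0:ℝ) ≤ ∫ ω, f ω ∂μ := integral_nonneg hf_nonneg
  have hMax := max_term_lower hσ hG hmap hindep hmono hf_int hf_nonneg hf_ge1
  have hTail := tail_term_lower hσ hG hmap hindep hmono hp hf_int hf_nonneg hf_ge1 hf_gep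
  have hSup : (⨆ i : Fin n, if ((i : ℕ) + 1 : ℝ) ≤ Real.exp p then
      σ (e i) * Real.sqrt (Real.log ((i : ℕ) + 2)) else 0) ≤ rexp 12 * ∫ ω, f ω ∂μ := by
    rcases Nat.eq_zero_or_pos n with hn | hn
    · subst hn
      rw [Real.iSup_of_isEmpty]
      positivity
    · haveI : Nonempty (Fin n) := ⟨⟨0, hn⟩⟩
      apply ciSup_le
      intro i
      split_ifs with hcond
      · exact hMax i
      · positivity
  have hco : rexp 12 + rexp 32 ≤ rexp 34 := by
    have a1 : rexp 12 ≤ rexp 32 := Real.exp_le_exp.2 (by norm_num)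
    have a2 : rexp 33 = rexp 1 * rexp 32 := by rw [← Real.exp_add]; norm_num
    have a3 : rexp 33 ≤ rexp 34 := Real.exp_le_exp.2 (by norm_num)
    nlinarith [two_le_exp_one, Real.exp_pos 32]
  have hcomb : (⨆ i : Fin n, if ((i : ℕ) + 1 : ℝ) ≤ Real.exp p then
        σ (e i) * Real.sqrt (Real.log ((i : ℕ) + 2)) else 0)
      + Real.sqrt p *
          (∑ i : Fin n, if Real.exp p ≤ ((i : ℕ) + 1 : ℝ) then σ (e i) ^ p else 0) ^ (1 / p)
      ≤ rexp 34 * ∫ ω, f ω ∂μ := by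
    have h1 := add_le_add hSup hTail
    have h2 : rexp 12 * (∫ ω, f ω ∂μ) + rexp 32 * (∫ ω, f ω ∂μ)
        = (rexp 12 + rexp 32) * ∫ ω, f ω ∂μ := by ring
    have h3 : (rexp 12 + rexp 32) * (∫ ω, f ω ∂μ) ≤ rexp 34 * ∫ ω, f ω ∂μ :=
      mul_le_mul_of_nonneg_right hco hI0
    calc _ ≤ rexp 12 * (∫ ω, f ω ∂μ) + rexp 32 * (∫ ω, f ω ∂μ) := h1
      _ = (rexp 12 + rexp 32) * ∫ ω, f ω ∂μ := h2
      _ ≤ rexp 34 * ∫ ω, f ω ∂μ := h3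
  have h4 : rexp (-34) * rexp 34 = 1 := by rw [← Real.exp_add]; norm_num
  calc rexp (-34) * ((⨆ i : Fin n, if ((i : ℕ) + 1 : ℝ) ≤ Real.exp p then
          σ (e i) * Real.sqrt (Real.log ((i : ℕ) + 2)) else 0)
        + Real.sqrt p *
            (∑ i : Fin n, if Real.exp p ≤ ((i : ℕ) + 1 : ℝ) then σ (e i) ^ p else 0) ^ (1 / p))
      ≤ rexp (-34) * (rexp 34 * ∫ ω, f ω ∂μ) :=
        mul_le_mul_of_nonneg_left hcomb (Real.exp_pos _).le
    _ = (rexp (-34) * rexp 34) * ∫ ω, f ω ∂μ := by ring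
    _ = ∫ ω, f ω ∂μ := by rw [h4, one_mul]
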